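/- For every t ∈ [0,1] and all z₁, z₂ ∈ ℝ, the one-sided Lipschitz condition (Ψ_t(z₂) − Ψ_t(z₁))(z₂ − z₁) ≤ e^t (z₂ − z₁)² holds. -/

import Mathlib

noncomputable section

def Phi (t z : ℝ) : ℝ := z / Real.sqrt (z ^ 2 + (1 - z ^ 2) * Real.exp (-2 * t))

def Psi (t z : ℝ) : ℝ := if t = 0 then z - z ^ 3 else (Phi t z - z) / t

lemma phi_deriv (a b : ℝ) (ha : 0 < a) (hb : 0 ≤ b) (z : ℝ) :
    HasDerivAt (fun z => z / Real.sqrt (a + b * z ^ 2))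
      (a / Real.sqrt (a + b * z ^ 2) ^ 3) z := by
  have hgpos : 0 < a + b * z ^ 2 := by positivity
  have hspos : 0 < Real.sqrt (a + b * z ^ 2) := Real.sqrt_pos.mpr hgpos
  have hg : HasDerivAt (fun z : ℝ => a + b * z ^ 2) (b * (2 * z)) z := by
    have := ((hasDerivAt_pow 2 z).const_mul b).const_add a
    simpa using this
  have hs : HasDerivAt (fun z : ℝ => Real.sqrt (a + b * z ^ 2))
      (b * (2 * z) / (2 * Real.sqrt (a + b * z ^ 2))) z := by
    have := (Real.hasDerivAt_sqrt hgpos.ne').comp z hg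
    simpa [Function.comp_def, div_eq_inv_mul, mul_comm, mul_assoc, mul_left_comm] using this
  have hf := (hasDerivAt_id z).div hs hspos.ne'
  refine hf.congr_deriv (Eq.symm ?_)
  have hsq : Real.sqrt (a + b * z ^ 2) ^ 2 = a + b * z ^ 2 :=
    Real.sq_sqrt hgpos.le
  simp only [id]
  field_simp
  linear_combination
    (-1 : ℝ) * hsq

lemma lip_aux (a b : ℝ) (ha : 0 < a) (hb : 0 ≤ b) (z₁ z₂ : ℝ) :
    |z₂ / Real.sqrt (a + b * z₂ ^ 2) - z₁ / Real.sqrt (a + b * z₁ ^ 2)|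
      ≤ (1 / Real.sqrt a) * |z₂ - z₁| := by
  have hsa : 0 < Real.sqrt a := Real.sqrt_pos.mpr ha
  have bound : ∀ x : ℝ, ‖a / Real.sqrt (a + b * x ^ 2) ^ 3‖ ≤ 1 / Real.sqrt a := by
    intro x
    have hgpos : 0 < a + b * x ^ 2 := by positivity
    have hspos : 0 < Real.sqrt (a + b * x ^ 2) := Real.sqrt_pos.mpr hgpos
    rw [Real.norm_eq_abs, abs_of_nonneg (by positivity)]
    have hle : Real.sqrt a ≤ Real.sqrt (a + b * x ^ 2) :=
      Real.sqrt_le_sqrt (by nlinarith)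
    have h1 : a / Real.sqrt (a + b * x ^ 2) ^ 3 ≤ a / Real.sqrt a ^ 3 :=
      div_le_div_of_nonneg_left ha.le (by positivity) (by gcongr)
    have h2 : a / Real.sqrt a ^ 3 = 1 / Real.sqrt a := by
      have : Real.sqrt a ^ 2 = a := Real.sq_sqrt ha.le
      field_simp
      linear_combination (-1 : ℝ) * this
    linarith [h1, h2.le]
  have key := Convex.norm_image_sub_le_of_norm_hasDerivWithin_le
    (f := fun z => z / Real.sqrt (a + b * z ^ 2))
    (f' := fun z => a / Real.sqrt (a + b * z ^ 2) ^ 3)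
    (s := Set.univ) (C := 1 / Real.sqrt a)
    (fun x _ => (phi_deriv a b ha hb x).hasDerivWithinAt)
    (fun x _ => bound x) convex_univ (Set.mem_univ z₁) (Set.mem_univ z₂)
  simpa [Real.norm_eq_abs] using key

lemma phi_lip (t : ℝ) (z₁ z₂ : ℝ) (ht0 : 0 ≤ t) :
    |Phi t z₂ - Phi t z₁| ≤ Real.exp t * |z₂ - z₁| := by
  have ha : 0 < Real.exp (-2 * t) := Real.exp_pos _
  have ha1 : Real.exp (-2 * t) ≤ 1 := Real.exp_le_one_iff.mpr (by linarith)
  have hPhi : ∀ z, Phi t z = z / Real.sqrt (Real.exp (-2 * t) + (1 - Real.exp (-2 * t)) * z ^ 2) := by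
    intro z
    unfold Phi
    rw [show z ^ 2 + (1 - z ^ 2) * Real.exp (-2 * t)
        = Real.exp (-2 * t) + (1 - Real.exp (-2 * t)) * z ^ 2 by ring]
  have hsqrt : Real.sqrt (Real.exp (-2 * t)) = Real.exp (-t) := by
    rw [show (-2 : ℝ) * t = (-t) + (-t) by ring, Real.exp_add,
      Real.sqrt_mul_self (Real.exp_pos _).le]
  have := lip_aux (Real.exp (-2 * t)) (1 - Real.exp (-2 * t)) ha (by linarith) z₁ z₂
  rw [hsqrt] at this
  rw [hPhi z₁, hPhi z₂]
  calc _ ≤ (1 / Real.exp (-t)) * |z₂ - z₁| := this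
    _ = Real.exp t * |z₂ - z₁| := by rw [Real.exp_neg, one_div, inv_inv]

theorem psi_one_sided_lipschitz (t : ℝ) (ht : t ∈ Set.Icc (0 : ℝ) 1) (z₁ z₂ : ℝ) :
    (Psi t z₂ - Psi t z₁) * (z₂ - z₁) ≤ Real.exp t * (z₂ - z₁) ^ 2 := by
  obtain ⟨ht0, ht1⟩ := ht
  rcases eq_or_lt_of_le ht0 with h0 | htpos
  · subst h0
    simp only [Psi, eq_self_iff_true, if_true, Real.exp_zero, one_mul]
    have h : (0:ℝ) ≤ (z₂ - z₁) ^ 2 * (z₁ ^ 2 + z₁ * z₂ + z₂ ^ 2) :=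
      mul_nonneg (sq_nonneg _) (by nlinarith [sq_nonneg (z₁ + z₂), sq_nonneg z₁, sq_nonneg z₂])
    nlinarith [h]
  · have htne : t ≠ 0 := htpos.ne'
    simp only [Psi, if_neg htne]
    have h1 : Real.exp t * (1 - t) ≤ 1 := by
      have := Real.add_one_le_exp (-t)
      have hpos := Real.exp_pos t
      have hmul : Real.exp t * (-t + 1) ≤ Real.exp t * Real.exp (-t) :=
        mul_le_mul_of_nonneg_left this hpos.le
      rw [← Real.exp_add] at hmul
      simp at hmul
      linarith [hmul]
    have h2 : (Phi t z₂ - Phi t z₁) * (z₂ - z₁) ≤ Real.exp t * (z₂ - z₁) ^ 2 := by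
      calc (Phi t z₂ - Phi t z₁) * (z₂ - z₁) ≤ |(Phi t z₂ - Phi t z₁) * (z₂ - z₁)| :=
            le_abs_self _
        _ = |Phi t z₂ - Phi t z₁| * |z₂ - z₁| := abs_mul _ _
        _ ≤ (Real.exp t * |z₂ - z₁|) * |z₂ - z₁| :=
            mul_le_mul_of_nonneg_right (phi_lip t z₁ z₂ ht0) (abs_nonneg _)
        _ = Real.exp t * (z₂ - z₁) ^ 2 := by rw [mul_assoc, ← abs_mul, ← sq, abs_sq]
    rw [div_sub_div_same, div_mul_eq_mul_div, div_le_iff₀ htpos]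
    nlinarith [h1, h2, sq_nonneg (z₂ - z₁), mul_le_mul_of_nonneg_right h1 (sq_nonneg (z₂ - z₁))]

end
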